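/- Let F : ℝ^d → ℝ be differentiable with L-Lipschitz gradient, let q ∈ ℝ^d be an approximate gradient, α ≤ 3ρ/(4L) with ρ > 0, and suppose ⟨q, G⟩ ≥ ρ‖G‖² where G = (λ - λ⁺)/α and λ⁺ = λ - αG. Then F(λ⁺) - F(λ) ≤ -(3αρ/8)‖G‖² + (α/ρ)‖q - ∇F(λ)‖². -/

import Mathlib

open RealInnerProductSpace

lemma descent_lemma {d : ℕ}
    (F : EuclideanSpace ℝ (Fin d) → ℝ)
    (F' : EuclideanSpace ℝ (Fin d) → EuclideanSpace ℝ (Fin d))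
    (L : ℝ) (hL : 0 ≤ L)
    (hgrad : ∀ x, HasGradientAt F (F' x) x)
    (hLip : ∀ x y, ‖F' x - F' y‖ ≤ L * ‖x - y‖)
    (x y : EuclideanSpace ℝ (Fin d)) :
    F y - F x ≤ ⟪F' x, y - x⟫ + L / 2 * ‖y - x‖ ^ 2 := by
  set v := y - x with hv
  have hcontF' : Continuous F' := by
    have : LipschitzWith L.toNNReal F' := by
      apply LipschitzWith.of_dist_le_mul
      intro a b
      rw [dist_eq_norm, dist_eq_norm]
      calc ‖F' a - F' b‖ ≤ L * ‖a - b‖ := hLip a b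
        _ ≤ L.toNNReal * ‖a - b‖ := by
            gcongr
            exact (Real.le_coe_toNNReal L)
    exact this.continuous
  have hderiv : ∀ t : ℝ, HasDerivAt (fun t : ℝ => F (x + t • v))
      ⟪F' (x + t • v), v⟫ t := by
    intro t
    have h1 : HasDerivAt (fun t : ℝ => x + t • v) v t := by
      simpa using ((hasDerivAt_id t).smul_const v).const_add x
    have h2 := (hgrad (x + t • v)).hasFDerivAt
    have := h2.comp_hasDerivAt t h1
    simp [InnerProductSpace.toDual_apply_apply] at this; exact this
  have hcont : Continuous (fun t : ℝ => ⟪F' (x + t • v), v⟫) := by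
    exact (hcontF'.comp (by continuity)).inner continuous_const
  have hint : F y - F x = ∫ t in (0:ℝ)..1, ⟪F' (x + t • v), v⟫ := by
    rw [intervalIntegral.integral_eq_sub_of_hasDerivAt
      (fun t _ => hderiv t) (hcont.intervalIntegrable 0 1)]
    simp [hv]
  have hconst : (∫ t in (0:ℝ)..1, ⟪F' x, v⟫) = ⟪F' x, v⟫ := by simp
  have hmono : (∫ t in (0:ℝ)..1, ⟪F' (x + t • v), v⟫)
      ≤ ∫ t in (0:ℝ)..1, (⟪F' x, v⟫ + L * t * ‖v‖ ^ 2) := by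
    apply intervalIntegral.integral_mono_on (by norm_num)
      (hcont.intervalIntegrable 0 1)
    · exact Continuous.intervalIntegrable (continuous_const.add ((continuous_const.mul continuous_id).mul continuous_const)) 0 1
    · intro t ht
      have h1 : ⟪F' (x + t • v), v⟫ - ⟪F' x, v⟫ = ⟪F' (x + t • v) - F' x, v⟫ := by
        rw [inner_sub_left]
      have h2 : ⟪F' (x + t • v) - F' x, v⟫ ≤ ‖F' (x + t • v) - F' x‖ * ‖v‖ :=
        real_inner_le_norm _ _
      have h3 : ‖F' (x + t • v) - F' x‖ ≤ L * (t * ‖v‖) := by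
        have := hLip (x + t • v) x
        simpa [norm_smul, abs_of_nonneg ht.1, mul_assoc] using this
      nlinarith [norm_nonneg v, norm_nonneg (F' (x + t • v) - F' x), ht.1,
        mul_le_mul_of_nonneg_right h3 (norm_nonneg v)]
  have hInt2 : (∫ t in (0:ℝ)..1, (⟪F' x, v⟫ + L * t * ‖v‖ ^ 2))
      = ⟪F' x, v⟫ + L / 2 * ‖v‖ ^ 2 := by
    have hre : ∀ t : ℝ, ⟪F' x, v⟫ + L * t * ‖v‖ ^ 2
        = ⟪F' x, v⟫ + (L * ‖v‖ ^ 2) * t := fun t => by ring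
    simp_rw [hre]
    rw [intervalIntegral.integral_add (intervalIntegrable_const)
      (intervalIntegral.intervalIntegrable_id.const_mul _),
      intervalIntegral.integral_const_mul, integral_id]
    norm_num
    ring
  rw [hint]
  rw [hInt2] at hmono
  exact hmono

/-- One-step progress bound with an approximate gradient under the
generalized-projection inequality. -/
theorem approx_gradient_descent_bound {d : ℕ}
    (F : EuclideanSpace ℝ (Fin d) → ℝ)
    (F' : EuclideanSpace ℝ (Fin d) → EuclideanSpace ℝ (Fin d))
    (L ρ α : ℝ) (hL : 0 < L) (hρ : 0 < ρ)
    (hgrad : ∀ x, HasGradientAt F (F' x) x)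
    (hLip : ∀ x y, ‖F' x - F' y‖ ≤ L * ‖x - y‖)
    (hα : 0 < α) (hαρ : α ≤ 3 * ρ / (4 * L))
    (lam q G : EuclideanSpace ℝ (Fin d))
    (hproj : ⟪q, G⟫ ≥ ρ * ‖G‖ ^ 2) :
    F (lam - α • G) - F lam ≤
      -(3 * α * ρ / 8) * ‖G‖ ^ 2 + (α / ρ) * ‖q - F' lam‖ ^ 2 := by
  have hd := descent_lemma F F' L hL.le hgrad hLip lam (lam - α • G)
  have hsub : lam - α • G - lam = -(α • G) := by abel
  rw [hsub] at hd
  have h1 : ⟪F' lam, -(α • G)⟫ = -α * ⟪F' lam, G⟫ := by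
    rw [inner_neg_right, real_inner_smul_right]; ring
  have h2 : ‖-(α • G)‖ ^ 2 = α ^ 2 * ‖G‖ ^ 2 := by
    rw [norm_neg, norm_smul]
    simp [abs_of_pos hα, mul_pow]
  rw [h1, h2] at hd
  -- Young: ⟪q - F' lam, G⟫ ≤ (1/ρ)‖q - F' lam‖² + (ρ/4)‖G‖²
  have hy : ⟪q - F' lam, G⟫ ≤ (1/ρ) * ‖q - F' lam‖ ^ 2 + (ρ/4) * ‖G‖ ^ 2 := by
    have h := real_inner_le_norm (q - F' lam) G
    have h1 : (1/ρ) * ‖q - F' lam‖ ^ 2 + (ρ/4) * ‖G‖ ^ 2 - ‖q - F' lam‖ * ‖G‖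
        = (1/ρ) * (‖q - F' lam‖ - ρ * ‖G‖ / 2) ^ 2 := by
      field_simp
      ring
    have h2 : (0:ℝ) ≤ (1/ρ) * (‖q - F' lam‖ - ρ * ‖G‖ / 2) ^ 2 := by positivity
    linarith
  have hsplit : ⟪F' lam, G⟫ = ⟪q, G⟫ - ⟪q - F' lam, G⟫ := by
    rw [inner_sub_left]; ring
  have hlow : ⟪F' lam, G⟫ ≥ ρ * ‖G‖ ^ 2 - ((1/ρ) * ‖q - F' lam‖ ^ 2 + (ρ/4) * ‖G‖ ^ 2) := by
    rw [hsplit]; linarith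
  have hαL : L * α ≤ 3 * ρ / 4 := by
    rw [le_div_iff₀ (by positivity)] at hαρ
    nlinarith
  have hG2 : (0:ℝ) ≤ ‖G‖ ^ 2 := by positivity
  have hq2 : (0:ℝ) ≤ ‖q - F' lam‖ ^ 2 := by positivity
  have hfinal : -α * ⟪F' lam, G⟫ + L / 2 * (α ^ 2 * ‖G‖ ^ 2)
      ≤ -(3 * α * ρ / 8) * ‖G‖ ^ 2 + (α / ρ) * ‖q - F' lam‖ ^ 2 := by
    have h5 := mul_le_mul_of_nonneg_left hlow hα.le
    have h6 : L / 2 * (α ^ 2 * ‖G‖ ^ 2) ≤ (3 * ρ / 8) * α * ‖G‖ ^ 2 := by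
      nlinarith [mul_le_mul_of_nonneg_right hαL (mul_nonneg hα.le hG2)]
    have h7 : α / ρ * ‖q - F' lam‖ ^ 2 = α * (1 / ρ * ‖q - F' lam‖ ^ 2) := by ring
    linarith
  linarith
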